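/- Let n ≥ 1 and x : Fin n → ℝ. Let z_1, …, z_n be independent random variables each distributed according to the standard Gumbel distribution, i.e. the probability measure on ℝ with density t ↦ exp(−t − exp(−t)) with respect to Lebesgue measure. Then for every index i, softmax(x)_i equals the probability that x_i + z_i > x_j + z_j for all j ≠ i; that is, the product measure of the set { z ∈ ℝ^n : ∀ j ≠ i, x_i + z_i > x_j + z_j } equals exp(x_i) / Σ_j exp(x_j). -/

import Mathlib

open MeasureTheory Real Set Filter

lemma gmax_bound (S : ℝ) (hS : 0 < S) (t : ℝ) :
    exp (-t) * exp (-S * exp (-t)) ≤ 4 / S ^ 2 * exp t := by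
  set u := S * exp (-t) with hu_def
  have hu : 0 < u := by positivity
  have h1 : u ^ 2 / 4 ≤ exp u := by
    have h2 := Real.add_one_le_exp (u / 2)
    have h3 : exp u = exp (u / 2) ^ 2 := by
      rw [← Real.exp_nat_mul]; norm_num [mul_div_cancel₀]
    nlinarith [Real.exp_pos (u / 2)]
  have hinv : exp (-u) * exp u = 1 := by rw [← Real.exp_add]; simp
  have h4 : exp (-u) ≤ 4 / u ^ 2 := by
    rw [le_div_iff₀ (by positivity)]
    nlinarith [Real.exp_pos u, Real.exp_pos (-u)]
  calc exp (-t) * exp (-S * exp (-t)) = exp (-t) * exp (-u) := by rw [neg_mul]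
    _ ≤ exp (-t) * (4 / u ^ 2) := mul_le_mul_of_nonneg_left h4 (Real.exp_pos _).le
    _ = 4 / S ^ 2 * exp t := by
        rw [hu_def, mul_pow, Real.exp_neg]
        field_simp

lemma gmax_cont (S : ℝ) : Continuous (fun t : ℝ => exp (-t) * exp (-S * exp (-t))) := by
  fun_prop

lemma gmax_integrable (S : ℝ) (hS : 0 < S) :
    Integrable (fun t : ℝ => exp (-t) * exp (-S * exp (-t))) := by
  rw [← integrableOn_univ, ← Set.Iic_union_Ioi (a := (0:ℝ)), integrableOn_union]
  constructor
  · refine Integrable.mono ((integrableOn_exp_Iic 0).const_mul (4 / S ^ 2)) 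
      ((gmax_cont S).aestronglyMeasurable.restrict) ?_
    filter_upwards with t
    have h1 := gmax_bound S hS t
    have h2 : (0:ℝ) ≤ exp (-t) * exp (-S * exp (-t)) := by positivity
    rw [Real.norm_eq_abs, Real.norm_eq_abs, abs_of_nonneg h2, abs_of_nonneg (by positivity)]
    exact h1
  · refine Integrable.mono (exp_neg_integrableOn_Ioi 0 (one_pos)) 
      ((gmax_cont S).aestronglyMeasurable.restrict) ?_
    filter_upwards with t
    have h2 : (0:ℝ) ≤ exp (-t) * exp (-S * exp (-t)) := by positivity
    rw [Real.norm_eq_abs, Real.norm_eq_abs, abs_of_nonneg h2, abs_of_nonneg (by positivity)]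
    calc exp (-t) * exp (-S * exp (-t)) ≤ exp (-t) * 1 := by
          refine mul_le_mul_of_nonneg_left ?_ (Real.exp_pos _).le
          exact Real.exp_le_one_iff.2 (by nlinarith [Real.exp_pos (-t)])
      _ = exp (-1 * t) := by rw [mul_one]; ring_nf

lemma gmax_hasDeriv (S : ℝ) (hS : 0 < S) (t : ℝ) :
    HasDerivAt (fun t : ℝ => exp (-S * exp (-t)) / S)
      (exp (-t) * exp (-S * exp (-t))) t := by
  have h1 : HasDerivAt (fun t : ℝ => -S * exp (-t)) (S * exp (-t)) t := by
    have := ((Real.hasDerivAt_exp (-t)).comp t (hasDerivAt_neg t)).const_mul (-S)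
    refine this.congr_deriv ?_
    ring
  have h2 := (Real.hasDerivAt_exp (-S * exp (-t))).comp t h1
  have h3 := h2.div_const S
  refine h3.congr_deriv ?_
  field_simp

lemma gmax_tendsto_bot (S : ℝ) (hS : 0 < S) :
    Filter.Tendsto (fun t : ℝ => exp (-S * exp (-t)) / S) atBot (nhds 0) := by
  have h1 : Filter.Tendsto (fun t : ℝ => -S * exp (-t)) atBot atBot := by
    have h2 : Filter.Tendsto (fun t : ℝ => exp (-t)) atBot atTop :=
      Real.tendsto_exp_atTop.comp tendsto_neg_atBot_atTop
    have h3 := (h2.const_mul_atTop hS)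
    have h4 := tendsto_neg_atTop_atBot.comp h3
    exact h4.congr (fun t => by simp)
  have := (Real.tendsto_exp_atBot.comp h1).div_const S
  simpa using this

lemma gmax_tendsto_top (S : ℝ) (hS : 0 < S) :
    Filter.Tendsto (fun t : ℝ => exp (-S * exp (-t)) / S) atTop (nhds (1 / S)) := by
  have h2 : Filter.Tendsto (fun t : ℝ => exp (-t)) atTop (nhds 0) :=
    Real.tendsto_exp_atBot.comp tendsto_neg_atTop_atBot
  have h1 : Filter.Tendsto (fun t : ℝ => -S * exp (-t)) atTop (nhds 0) := by
    simpa using h2.const_mul (-S)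
  have := (Real.continuous_exp.tendsto 0).comp h1
  simp only [Real.exp_zero] at this
  exact this.div_const S

lemma gmax_integral (S : ℝ) (hS : 0 < S) :
    ∫ t : ℝ, exp (-t) * exp (-S * exp (-t)) = 1 / S := by
  have := integral_of_hasDerivAt_of_tendsto (f := fun t : ℝ => exp (-S * exp (-t)) / S)
    (fun t => gmax_hasDeriv S hS t) (gmax_integrable S hS)
    (gmax_tendsto_bot S hS) (gmax_tendsto_top S hS)
  simpa using this

lemma gmax_integral_Iic (S : ℝ) (hS : 0 < S) (a : ℝ) :
    ∫ t in Set.Iic a, exp (-t) * exp (-S * exp (-t)) = exp (-S * exp (-a)) / S := by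
  have := integral_Iic_of_hasDerivAt_of_tendsto' (a := a)
    (f := fun t : ℝ => exp (-S * exp (-t)) / S)
    (fun t _ => gmax_hasDeriv S hS t) (gmax_integrable S hS).integrableOn
    (gmax_tendsto_bot S hS)
  simpa using this

lemma gmax_lintegral (S : ℝ) (hS : 0 < S) :
    ∫⁻ t : ℝ, ENNReal.ofReal (exp (-t) * exp (-S * exp (-t))) = ENNReal.ofReal (1 / S) := by
  rw [← ofReal_integral_eq_lintegral_ofReal (gmax_integrable S hS)
    (Filter.Eventually.of_forall fun t => by positivity), gmax_integral S hS]

lemma gmax_lintegral_Iio (S : ℝ) (hS : 0 < S) (a : ℝ) :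
    ∫⁻ t in Set.Iio a, ENNReal.ofReal (exp (-t) * exp (-S * exp (-t)))
      = ENNReal.ofReal (exp (-S * exp (-a)) / S) := by
  rw [setLIntegral_congr (Iio_ae_eq_Iic (a := a)),
    ← ofReal_integral_eq_lintegral_ofReal (gmax_integrable S hS).integrableOn
    (Filter.Eventually.of_forall fun t => by positivity), gmax_integral_Iic S hS]

lemma gmax_density_eq (t : ℝ) (S : ℝ) :
    exp (-t - exp (-t)) * exp (-S * exp (-t)) = exp (-t) * exp (-(1 + S) * exp (-t)) := by
  rw [← Real.exp_add, ← Real.exp_add]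
  ring_nf

lemma gumbel_measurable : Measurable (fun t : ℝ => ENNReal.ofReal (exp (-t - exp (-t)))) := by
  fun_prop

lemma gumbel_Iio (gumbel : Measure ℝ)
    (hgumbel : gumbel
      = volume.withDensity (fun t => ENNReal.ofReal (Real.exp (-t - Real.exp (-t)))))
    (a : ℝ) : gumbel (Set.Iio a) = ENNReal.ofReal (exp (-exp (-a))) := by
  rw [hgumbel, withDensity_apply _ measurableSet_Iio]
  have h1 : ∀ t : ℝ, exp (-t - exp (-t)) = exp (-t) * exp (-1 * exp (-t)) := by
    intro t; rw [← Real.exp_add]; ring_nf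
  simp only [h1]
  rw [gmax_lintegral_Iio 1 one_pos a]
  norm_num

lemma gumbel_prob (gumbel : Measure ℝ)
    (hgumbel : gumbel
      = volume.withDensity (fun t => ENNReal.ofReal (Real.exp (-t - Real.exp (-t))))) :
    IsProbabilityMeasure gumbel := by
  constructor
  rw [hgumbel]
  rw [withDensity_apply _ MeasurableSet.univ, Measure.restrict_univ]
  have h1 : ∀ t : ℝ, exp (-t - exp (-t)) = exp (-t) * exp (-1 * exp (-t)) := by
    intro t; rw [← Real.exp_add]; ring_nf
  simp only [h1]
  rw [gmax_lintegral 1 one_pos]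
  norm_num

/-- Gumbel-max trick: if `z j` are i.i.d. standard Gumbel, then
`softmax x i` equals the probability that `x i + z i` beats all other `x j + z j`. -/
theorem gumbel_max_softmax
    (n : ℕ) (hn : 1 ≤ n) (x : Fin n → ℝ)
    (gumbel : Measure ℝ)
    (hgumbel : gumbel
      = volume.withDensity (fun t => ENNReal.ofReal (Real.exp (-t - Real.exp (-t)))))
    (i : Fin n) :
    (Measure.pi fun _ : Fin n => gumbel)
        {z : Fin n → ℝ | ∀ j, j ≠ i → x j + z j < x i + z i}
      = ENNReal.ofReal (Real.exp (x i) / ∑ j, Real.exp (x j)) := by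
  obtain ⟨m, rfl⟩ : ∃ m, n = m + 1 := ⟨n - 1, (Nat.succ_pred_eq_of_pos hn).symm⟩
  haveI hP : IsProbabilityMeasure gumbel := gumbel_prob gumbel hgumbel
  set T : ℝ := ∑ k : Fin m, exp (x (i.succAbove k) - x i) with hT
  have hT0 : 0 ≤ T := Finset.sum_nonneg fun k _ => (Real.exp_pos _).le
  have hS : (0:ℝ) < 1 + T := by linarith
  set s : Set (ℝ × (Fin m → ℝ)) :=
    {p | ∀ k, p.2 k < x i + p.1 - x (i.succAbove k)} with hs
  have hs_meas : MeasurableSet s := by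
    have h : s = ⋂ k, {p : ℝ × (Fin m → ℝ) | p.2 k < x i + p.1 - x (i.succAbove k)} := by
      ext p; simp [hs, Set.mem_iInter]
    rw [h]
    refine MeasurableSet.iInter fun k => measurableSet_lt ?_ ?_ <;> fun_prop
  have hA : {z : Fin (m+1) → ℝ | ∀ j, j ≠ i → x j + z j < x i + z i}
      = (MeasurableEquiv.piFinSuccAbove (fun _ => ℝ) i) ⁻¹' s := by
    ext z
    have he : (MeasurableEquiv.piFinSuccAbove (fun _ : Fin (m+1) => ℝ) i) z
        = (z i, fun k => z (i.succAbove k)) := rfl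
    simp only [Set.mem_setOf_eq, Set.mem_preimage, he, hs]
    constructor
    · intro h k
      have := h (i.succAbove k) (Fin.succAbove_ne i k)
      show z (i.succAbove k) < x i + z i - x (i.succAbove k)
      linarith
    · intro h j hj
      obtain ⟨k, rfl⟩ := Fin.exists_succAbove_eq hj
      have : z (i.succAbove k) < x i + z i - x (i.succAbove k) := h k
      linarith
  rw [hA, MeasurePreserving.measure_preimage_equiv
      (measurePreserving_piFinSuccAbove (fun _ => gumbel) i) s]
  rw [Measure.prod_apply hs_meas]
  have hinner : ∀ t : ℝ, (Measure.pi fun _ : Fin m => gumbel) (Prod.mk t ⁻¹' s)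
      = ENNReal.ofReal (exp (-T * exp (-t))) := by
    intro t
    have hslice : Prod.mk t ⁻¹' s
        = Set.pi Set.univ (fun k : Fin m => Set.Iio (x i + t - x (i.succAbove k))) := by
      ext w; simp [hs, Set.mem_pi]
    rw [hslice, Measure.pi_pi]
    have hcdf : ∀ k : Fin m, gumbel (Set.Iio (x i + t - x (i.succAbove k)))
        = ENNReal.ofReal (exp (-(exp (x (i.succAbove k) - x i) * exp (-t)))) := by
      intro k
      rw [gumbel_Iio gumbel hgumbel]
      congr 2
      rw [← Real.exp_add]
      ring_nf
    simp only [hcdf]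
    rw [← ENNReal.ofReal_prod_of_nonneg (fun k _ => (Real.exp_pos _).le)]
    congr 1
    rw [← Real.exp_sum]
    congr 1
    rw [hT, neg_mul, Finset.sum_mul, ← Finset.sum_neg_distrib]
  simp only [hinner]
  rw [hgumbel, lintegral_withDensity_eq_lintegral_mul _ gumbel_measurable (by fun_prop)]
  have hmul : ∀ t : ℝ, ((fun t => ENNReal.ofReal (exp (-t - exp (-t)))) *
        (fun t => ENNReal.ofReal (exp (-T * exp (-t))))) t
      = ENNReal.ofReal (exp (-t) * exp (-(1 + T) * exp (-t))) := by
    intro t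
    simp only [Pi.mul_apply]
    rw [← ENNReal.ofReal_mul (Real.exp_pos _).le, gmax_density_eq]
  simp only [hmul]
  rw [gmax_lintegral (1 + T) hS]
  congr 1
  have hsum : ∑ j, exp (x j) = exp (x i) + ∑ k : Fin m, exp (x (i.succAbove k)) :=
    Fin.sum_univ_succAbove _ i
  have hTe : T * exp (x i) = ∑ k : Fin m, exp (x (i.succAbove k)) := by
    rw [hT, Finset.sum_mul]
    refine Finset.sum_congr rfl fun k _ => ?_
    rw [← Real.exp_add]; ring_nf
  have hpos : (0:ℝ) < ∑ j, exp (x j) := by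
    rw [hsum]; positivity
  rw [div_eq_div_iff hS.ne' hpos.ne']
  nlinarith [hsum, hTe]
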